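/- Let K ∈ ℕ with K ≥ 1, and let R₁, …, R_{K+1} : Ω → ℝ be real random variables on a probability space (Ω, F, P) whose joint distribution is exchangeable, i.e., for every permutation π of {1, …, K+1}, the law of (R_{π(1)}, …, R_{π(K+1)}) equals the law of (R₁, …, R_{K+1}). Let ε ∈ (0,1) and set q = ⌈(K+1)(1−ε)⌉, and assume q ≤ K. Define R_(q)(ω) to be the q-th smallest value among R₁(ω), …, R_K(ω). Then P(R_{K+1} ≤ R_(q)) ≥ 1 − ε. -/

import Mathlib

open MeasureTheory

open Finset

/-- The `q`-th smallest value (1-indexed) among the `K` values `r 0, …, r (K-1)`,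
obtained by sorting the realized values in ascending order. -/
noncomputable def qthSmallest {K : ℕ} (q : ℕ) (r : Fin K → ℝ) : ℝ :=
  (List.insertionSort (· ≤ ·) (List.ofFn r)).getD (q - 1) 0


lemma countP_ofFn {n : ℕ} (x : Fin n → ℝ) (p : ℝ → Prop) [DecidablePred p] :
    (List.ofFn x).countP (fun y => decide (p y)) =
      (Finset.univ.filter (fun i => p (x i))).card := by
  simp [Fin.univ_def, Finset.filter, Finset.card, List.countP_eq_length_filter,
    Function.comp, List.ofFn_eq_map, List.countP_map, List.filter_map]
  rfl

lemma le_countP_of_take {L : List ℝ} {p : ℝ → Bool} {q : ℕ} (hq : q ≤ L.length)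
    (h : ∀ i (h : i < q), p (L[i]'(h.trans_le hq)) = true) : q ≤ L.countP p := by
  have h1 : L.countP p = (L.take q).countP p + (L.drop q).countP p := by
    rw [← List.countP_append, List.take_append_drop]
  have h2 : (L.take q).countP p = q := by
    rw [List.countP_eq_length.2, List.length_take, min_eq_left hq]
    intro a ha
    obtain ⟨i, hi, rfl⟩ := List.mem_iff_getElem.1 ha
    rw [List.getElem_take]
    simp only [List.length_take] at hi
    exact h i (by omega)
  omega

lemma countP_le_of_drop {L : List ℝ} {p : ℝ → Bool} {q : ℕ}
    (h : ∀ i (hi : i < L.length), q ≤ i → p L[i] = false) : L.countP p ≤ q := by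
  have h1 : L.countP p = (L.take q).countP p + (L.drop q).countP p := by
    rw [← List.countP_append, List.take_append_drop]
  have h2 : (L.drop q).countP p = 0 := by
    rw [List.countP_eq_zero]
    intro a ha
    obtain ⟨i, hi, rfl⟩ := List.mem_iff_getElem.1 ha
    rw [List.getElem_drop]
    simp only [List.length_drop] at hi
    have hx := h (q+i) (by omega) (Nat.le_add_right q i)
    simp [hx]
  have h3 : (L.take q).countP p ≤ q := by
    have hh := (L.take q).countP_le_length (p := p)
    rw [List.length_take] at hh
    exact hh.trans (min_le_left _ _)
  omega

lemma sorted_getElem_le {L : List ℝ} (hs : L.Pairwise (· ≤ ·)) {i j : ℕ}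
    (hi : i < L.length) (hj : j < L.length) (hij : i ≤ j) : L[i] ≤ L[j] := by
  rcases eq_or_lt_of_le hij with h | h
  · subst h; rfl
  · exact List.pairwise_iff_getElem.1 hs i j hi hj h

lemma lemA {K : ℕ} (r : Fin K → ℝ) (t : ℝ) (q : ℕ) (hq1 : 1 ≤ q) (hqK : q ≤ K)
    (h : (Finset.univ.filter (fun i => r i < t)).card ≤ q - 1) :
    t ≤ qthSmallest q r := by
  by_contra hlt
  push_neg at hlt
  set L := List.insertionSort (· ≤ ·) (List.ofFn r) with hL
  have hlen : L.length = K := by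
    rw [List.length_insertionSort, List.length_ofFn]
  have hsort : L.Pairwise (· ≤ ·) := List.pairwise_insertionSort _ _
  have hq1' : q - 1 < L.length := by omega
  have hget : qthSmallest q r = L[q-1] := List.getD_eq_getElem L 0 hq1'
  have hcnt : q ≤ L.countP (fun y => decide (y < t)) := by
    apply le_countP_of_take (by omega)
    intro i hi
    have : L[i]'(by omega) ≤ L[q-1] := sorted_getElem_le hsort (by omega) hq1' (by omega)
    simp only [decide_eq_true_eq]
    exact lt_of_le_of_lt this (hget ▸ hlt)
  have hperm : L.countP (fun y => decide (y < t)) =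
      (List.ofFn r).countP (fun y => decide (y < t)) :=
    (List.perm_insertionSort _ _).countP_eq _
  rw [hperm, countP_ofFn] at hcnt
  omega

lemma lemB {n : ℕ} (x : Fin n → ℝ) (q : ℕ) (hq1 : 1 ≤ q) (hqn : q ≤ n) :
    q ≤ (Finset.univ.filter (fun j =>
      (Finset.univ.filter (fun i => x i < x j)).card ≤ q - 1)).card := by
  set L := List.insertionSort (· ≤ ·) (List.ofFn x) with hL
  have hlen : L.length = n := by
    rw [List.length_insertionSort, List.length_ofFn]
  have hsort : L.Pairwise (· ≤ ·) := List.pairwise_insertionSort _ _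
  have hq1' : q - 1 < L.length := by omega
  set m := L[q-1] with hm
  have sub1 : q ≤ (Finset.univ.filter (fun j => x j ≤ m)).card := by
    have e1 := countP_ofFn x (fun y => y ≤ m)
    rw [← e1, ← (List.perm_insertionSort (· ≤ ·) (List.ofFn x)).countP_eq, ← hL]
    apply le_countP_of_take (by omega)
    intro i hi
    simp only [decide_eq_true_eq]
    exact sorted_getElem_le hsort (by omega) hq1' (by omega)
  have sub2 : ∀ j, x j ≤ m → (Finset.univ.filter (fun i => x i < x j)).card ≤ q - 1 := by
    intro j hj
    have e2 := countP_ofFn x (fun y => y < x j)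
    rw [← e2, ← (List.perm_insertionSort (· ≤ ·) (List.ofFn x)).countP_eq, ← hL]
    apply countP_le_of_drop
    intro i hi hqi
    have : m ≤ L[i] := sorted_getElem_le hsort hq1' hi (by omega)
    simp only [decide_eq_false_iff_not, not_lt]
    exact hj.trans this
  refine sub1.trans (Finset.card_le_card ?_)
  exact Finset.monotone_filter_right _ (fun j _ hj => sub2 j hj)

lemma card_filter_comp_perm {n : ℕ} (π : Equiv.Perm (Fin n)) (p : Fin n → Prop)
    [DecidablePred p] :
    (Finset.univ.filter (fun i => p (π i))).card = (Finset.univ.filter p).card := by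
  apply Finset.card_equiv π
  intro i
  simp

/-- Split conformal prediction coverage guarantee: if the `K + 1` scores
`R 0, …, R K` are exchangeable, `ε ∈ (0,1)` and `q = ⌈(K+1)(1−ε)⌉ ≤ K`, then the
new score `R K` is at most the `q`-th smallest of the first `K` calibration
scores with probability at least `1 − ε`. -/
theorem conformal_coverage
    {Ω : Type*} [MeasurableSpace Ω] (P : Measure Ω) [IsProbabilityMeasure P]
    (K : ℕ) (hK : 1 ≤ K) (R : Fin (K + 1) → Ω → ℝ)
    (hmeas : ∀ i, Measurable (R i))
    (hexch : ∀ π : Equiv.Perm (Fin (K + 1)),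
      Measure.map (fun ω => fun i => R (π i) ω) P =
        Measure.map (fun ω => fun i => R i ω) P)
    (ε : ℝ) (hε₀ : 0 < ε) (hε₁ : ε < 1)
    (q : ℕ) (hq : q = ⌈((K : ℝ) + 1) * (1 - ε)⌉₊) (hqK : q ≤ K) :
    ENNReal.ofReal (1 - ε) ≤
      P {ω | R (Fin.last K) ω ≤ qthSmallest q (fun i : Fin K => R i.castSucc ω)} := by
  classical
  have hq1 : 1 ≤ q := by
    rw [hq]
    exact Nat.ceil_pos.2 (by nlinarith)
  -- the events
  set E : Fin (K + 1) → Set Ω := fun j =>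
    {ω | (Finset.univ.filter (fun i => R i ω < R j ω)).card ≤ q - 1} with hE
  -- measurability
  have hN : ∀ j, Measurable fun ω => (Finset.univ.filter (fun i => R i ω < R j ω)).card := by
    intro j
    have : (fun ω => (Finset.univ.filter (fun i => R i ω < R j ω)).card) =
        fun ω => ∑ i : Fin (K+1), if R i ω < R j ω then 1 else 0 := by
      funext ω; exact Finset.card_filter _ _
    rw [this]
    exact Finset.measurable_sum _ fun i _ =>
      Measurable.ite (measurableSet_lt (hmeas i) (hmeas j)) measurable_const measurable_const
  have hEmeas : ∀ j, MeasurableSet (E j) := by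
    intro j
    have h1 : E j = (fun ω => (Finset.univ.filter (fun i => R i ω < R j ω)).card) ⁻¹'
        (Set.Iic (q - 1)) := rfl
    rw [h1]
    exact (hN j) trivial
  -- all events have the same probability, by exchangeability
  have hsame : ∀ j, P (E j) = P (E (Fin.last K)) := by
    intro j
    set π := Equiv.swap j (Fin.last K) with hπ
    set A : Set (Fin (K+1) → ℝ) :=
      {x | (Finset.univ.filter (fun i => x i < x (Fin.last K))).card ≤ q - 1} with hA
    have hAmeas : MeasurableSet A := by
      have : Measurable fun x : Fin (K+1) → ℝ =>
          (Finset.univ.filter (fun i => x i < x (Fin.last K))).card := by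
        have : (fun x : Fin (K+1) → ℝ =>
            (Finset.univ.filter (fun i => x i < x (Fin.last K))).card) =
            fun x => ∑ i : Fin (K+1), if x i < x (Fin.last K) then 1 else 0 := by
          funext x; exact Finset.card_filter _ _
        rw [this]
        exact Finset.measurable_sum _ fun i _ =>
          Measurable.ite (measurableSet_lt (measurable_pi_apply i)
            (measurable_pi_apply (Fin.last K))) measurable_const measurable_const
      have h2 : A = (fun x : Fin (K+1) → ℝ =>
          (Finset.univ.filter (fun i => x i < x (Fin.last K))).card) ⁻¹' (Set.Iic (q - 1)) := rfl
      rw [h2]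
      exact this trivial
    have hg : Measurable fun ω => fun i => R i ω := measurable_pi_lambda _ hmeas
    have hf : Measurable fun ω => fun i => R (π i) ω :=
      measurable_pi_lambda _ fun i => hmeas (π i)
    have hmap := congrArg (fun μ => μ A) (hexch π)
    rw [Measure.map_apply hf hAmeas, Measure.map_apply hg hAmeas] at hmap
    have hpre_g : (fun ω => fun i => R i ω) ⁻¹' A = E (Fin.last K) := rfl
    have hpre_f : (fun ω => fun i => R (π i) ω) ⁻¹' A = E j := by
      ext ω
      simp only [hA, Set.mem_preimage, Set.mem_setOf_eq, hE]
      have hlast : π (Fin.last K) = j := Equiv.swap_apply_right _ _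
      simp only [hlast]
      rw [card_filter_comp_perm π (fun i => R i ω < R j ω)]
    rw [hpre_g, hpre_f] at hmap
    exact hmap
  -- sum of probabilities is at least q
  have hsum : (q : ENNReal) ≤ ∑ j : Fin (K+1), P (E j) := by
    have hpt : ∀ ω, (q : ENNReal) ≤ ∑ j : Fin (K+1), (E j).indicator (fun _ => 1) ω := by
      intro ω
      have hB := lemB (fun i => R i ω) q hq1 (by omega)
      calc (q : ENNReal) ≤
          ((Finset.univ.filter (fun j : Fin (K+1) =>
            (Finset.univ.filter (fun i => R i ω < R j ω)).card ≤ q - 1)).card : ENNReal) := by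
            exact_mod_cast hB
        _ = ∑ j : Fin (K+1), (E j).indicator (fun _ => 1) ω := by
            rw [Finset.card_filter]
            push_cast
            refine Finset.sum_congr rfl fun j _ => ?_
            by_cases h : ω ∈ E j
            · rw [Set.indicator_of_mem h]; exact if_pos h
            · rw [Set.indicator_of_notMem h]; exact if_neg h
    calc (q : ENNReal) = ∫⁻ ω, (q : ENNReal) ∂P := by
          rw [lintegral_const, measure_univ, mul_one]
      _ ≤ ∫⁻ ω, ∑ j : Fin (K+1), (E j).indicator (fun _ => 1) ω ∂P := lintegral_mono hpt
      _ = ∑ j : Fin (K+1), ∫⁻ ω, (E j).indicator (fun _ => 1) ω ∂P := by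
          rw [lintegral_finset_sum]
          exact fun j _ => measurable_const.indicator (hEmeas j)
      _ = ∑ j : Fin (K+1), P (E j) := by
          refine Finset.sum_congr rfl fun j _ => ?_
          rw [lintegral_indicator_const (hEmeas j), one_mul]
  -- hence q ≤ (K+1) * P (E last)
  have hmain : (q : ENNReal) ≤ (K + 1 : ENNReal) * P (E (Fin.last K)) := by
    calc (q : ENNReal) ≤ ∑ j : Fin (K+1), P (E j) := hsum
      _ = ∑ _j : Fin (K+1), P (E (Fin.last K)) := Finset.sum_congr rfl fun j _ => hsame j
      _ = (K + 1 : ENNReal) * P (E (Fin.last K)) := by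
          rw [Finset.sum_const, Finset.card_univ, Fintype.card_fin, nsmul_eq_mul]
          push_cast
          ring
  -- E last is contained in the target event
  have hsub : E (Fin.last K) ⊆
      {ω | R (Fin.last K) ω ≤ qthSmallest q (fun i : Fin K => R i.castSucc ω)} := by
    intro ω hω
    simp only [hE, Set.mem_setOf_eq] at hω ⊢
    apply lemA _ _ q hq1 hqK
    have : (Finset.univ.filter (fun i : Fin (K+1) => R i ω < R (Fin.last K) ω)).card =
        (Finset.univ.filter (fun i : Fin K => R i.castSucc ω < R (Fin.last K) ω)).card := by
      rw [Finset.card_filter, Finset.card_filter, Fin.sum_univ_castSucc]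
      simp
    omega
  -- conclude
  have hP : ENNReal.ofReal (1 - ε) * (K + 1 : ENNReal) ≤ P (E (Fin.last K)) * (K + 1 : ENNReal) := by
    have h1 : ENNReal.ofReal (1 - ε) * (K + 1 : ENNReal) ≤ (q : ENNReal) := by
      have hle : (1 - ε) * ((K : ℝ) + 1) ≤ q := by
        rw [hq]
        calc (1 - ε) * ((K : ℝ) + 1) = ((K : ℝ) + 1) * (1 - ε) := by ring
          _ ≤ ⌈((K : ℝ) + 1) * (1 - ε)⌉₊ := Nat.le_ceil _
      calc ENNReal.ofReal (1 - ε) * (K + 1 : ENNReal)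
          = ENNReal.ofReal ((1 - ε) * ((K : ℝ) + 1)) := by
            rw [ENNReal.ofReal_mul (by linarith)]
            congr 1
            rw [ENNReal.ofReal_add (by positivity) zero_le_one]
            simp [ENNReal.ofReal_natCast]
        _ ≤ ENNReal.ofReal (q : ℝ) := ENNReal.ofReal_le_ofReal hle
        _ = (q : ENNReal) := ENNReal.ofReal_natCast q
    calc ENNReal.ofReal (1 - ε) * (K + 1 : ENNReal) ≤ (q : ENNReal) := h1
      _ ≤ (K + 1 : ENNReal) * P (E (Fin.last K)) := hmain
      _ = P (E (Fin.last K)) * (K + 1 : ENNReal) := mul_comm _ _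
  have hcancel : ENNReal.ofReal (1 - ε) ≤ P (E (Fin.last K)) :=
    (ENNReal.mul_le_mul_iff_left ((zero_lt_one.trans_le le_add_self).ne') (by simp)).1 hP
  exact hcancel.trans (measure_mono hsub)
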